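/- In misère Partizan Kayles, no position is a Left-win: for every position G (a finite multiset of strips), the misère outcome of G is not L (i.e., it is not the case that Left wins regardless of who moves first). -/
import Mathlib


/-- Add a strip of length `k` to a position (strips of length 0 are discarded). -/
def addStrip (m : Multiset ℕ) (k : ℕ) : Multiset ℕ := if k = 0 then m else k ::ₘ m

/-- Left removes one square from a strip of length `n ≥ 1`, leaving strips `i` and `n-1-i`. -/
def LeftMove (G G' : Multiset ℕ) : Prop :=
  ∃ n ∈ G, ∃ i, i + 1 ≤ n ∧ G' = addStrip (addStrip (G.erase n) i) (n - 1 - i)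

/-- Right removes two adjacent squares from a strip of length `n ≥ 2`, leaving `i` and `n-2-i`. -/
def RightMove (G G' : Multiset ℕ) : Prop :=
  ∃ n ∈ G, ∃ i, i + 2 ≤ n ∧ G' = addStrip (addStrip (G.erase n) i) (n - 2 - i)

mutual
  /-- Misère play: Left, to move, wins (a player unable to move wins). -/
  inductive LeftWinsMover : Multiset ℕ → Prop
    | cannot (G : Multiset ℕ) : (¬ ∃ G', LeftMove G G') → LeftWinsMover G
    | move (G G' : Multiset ℕ) : LeftMove G G' → LeftWinsWaiter G' → LeftWinsMover G
  /-- Misère play: Left wins with Right to move. -/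
  inductive LeftWinsWaiter : Multiset ℕ → Prop
    | intro (G : Multiset ℕ) : (∃ G', RightMove G G') →
        (∀ G', RightMove G G' → LeftWinsMover G') → LeftWinsWaiter G
end

inductive Outcome | L | N | P | R
  deriving DecidableEq

open Classical in
/-- The misère outcome `o⁻(G)`. -/
noncomputable def outcome (G : Multiset ℕ) : Outcome :=
  if LeftWinsMover G then (if LeftWinsWaiter G then Outcome.L else Outcome.N)
  else (if LeftWinsWaiter G then Outcome.P else Outcome.R)

/-- The partial order on outcomes: `L` greatest, `R` least, `N` and `P` incomparable. -/
def Outcome.le (a b : Outcome) : Prop := a = b ∨ a = Outcome.R ∨ b = Outcome.L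

/-- `pos k j` is the position `kS₁ + jS₂`. -/
def pos (k j : ℕ) : Multiset ℕ := Multiset.replicate k 1 + Multiset.replicate j 2


lemma addStrip_sum (m : Multiset ℕ) (k : ℕ) : (addStrip m k).sum = k + m.sum := by
  unfold addStrip; split <;> simp_all

lemma leftMove_sum {G G' : Multiset ℕ} (h : LeftMove G G') : G'.sum + 1 = G.sum := by
  obtain ⟨n, hn, i, hi, rfl⟩ := h
  have hs : G.sum = n + (G.erase n).sum := by
    conv_lhs => rw [← Multiset.cons_erase hn]
    rw [Multiset.sum_cons]
  rw [addStrip_sum, addStrip_sum, hs]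
  omega

lemma rightMove_sum {G G' : Multiset ℕ} (h : RightMove G G') : G'.sum + 2 = G.sum := by
  obtain ⟨n, hn, i, hi, rfl⟩ := h
  have hs : G.sum = n + (G.erase n).sum := by
    conv_lhs => rw [← Multiset.cons_erase hn]
    rw [Multiset.sum_cons]
  rw [addStrip_sum, addStrip_sum, hs]
  omega

lemma sum_eq_zero_of_no_left (G : Multiset ℕ) (h : ¬ ∃ G', LeftMove G G') : G.sum = 0 := by
  apply Multiset.sum_eq_zero
  intro n hn
  by_contra hne
  exact h ⟨_, n, hn, 0, by omega, rfl⟩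

mutual
theorem mover_sum : ∀ (G : Multiset ℕ), LeftWinsMover G → G.sum % 3 = 0
  | G, .cannot _ h => by rw [sum_eq_zero_of_no_left G h]
  | G, .move _ G' hm hw => by
      have h2 := leftMove_sum hm
      have h1 := waiter_sum G' hw
      omega
  termination_by G _ => G.sum
  decreasing_by omega
theorem waiter_sum : ∀ (G : Multiset ℕ), LeftWinsWaiter G → G.sum % 3 = 2
  | G, .intro _ ⟨G', hr⟩ hall => by
      have h2 := rightMove_sum hr
      have h1 := mover_sum G' (hall G' hr)
      omega
  termination_by G _ => G.sum
  decreasing_by omega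
end

theorem kayles_no_left_win (G : Multiset ℕ) (hG : 0 ∉ G) :
    outcome G ≠ Outcome.L := by
  intro h
  unfold outcome at h
  split_ifs at h with h1 h2
  have := mover_sum G h1
  have := waiter_sum G h2
  omega
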